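/- Let n ≥ 1 and let x > 1 be real. Then Φ_n^*(x) = ∏_{j=1}^n (x^{(j,n)_*} − 1)^{cos(2πj/n)}, where the exponents are the real powers (rpow) of the positive reals x^{(j,n)_*} − 1. -/

import Mathlib

open Complex Polynomial Finset

/-- The unitary gcd `(j,n)_*`: the largest `d` with `d ∣ j`, `d ∣ n` and `gcd(d, n/d) = 1`. -/
def ugcd (j n : ℕ) : ℕ :=
  Nat.findGreatest (fun d => d ∣ j ∧ d ∣ n ∧ Nat.gcd d (n / d) = 1) n

/-- The unitary cyclotomic polynomial `Φ_n^*(X) = ∏_{1 ≤ j ≤ n, (j,n)_* = 1} (X − ζ_n^j)`. -/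
noncomputable def unitaryCyc (n : ℕ) : Polynomial ℂ :=
  ∏ j ∈ (Finset.Icc 1 n).filter (fun j => ugcd j n = 1),
    (X - C (Complex.exp (2 * Real.pi * Complex.I / n) ^ j))

lemma ugcd_spec {j n : ℕ} (hn : 1 ≤ n) :
    ugcd j n ∣ j ∧ ugcd j n ∣ n ∧ Nat.gcd (ugcd j n) (n / ugcd j n) = 1 := by
  unfold ugcd
  exact Nat.findGreatest_spec (P := fun d => d ∣ j ∧ d ∣ n ∧ Nat.gcd d (n / d) = 1) (m := 1) hn (by exact ⟨one_dvd _, one_dvd _, by simp⟩)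

lemma ugcd_pos {j n : ℕ} (hn : 1 ≤ n) : 1 ≤ ugcd j n :=
  Nat.le_findGreatest hn (by exact ⟨one_dvd _, one_dvd _, by simp⟩)

lemma ugcd_le {j n : ℕ} : ugcd j n ≤ n := by unfold ugcd; exact Nat.findGreatest_le n

-- helper : a ∣ b → b ∣ n → n / b ∣ n / a
lemma div_dvd_div_of_dvd_of_dvd {a b n : ℕ} (hab : a ∣ b) (hbn : b ∣ n) : n / b ∣ n / a := by
  rcases Nat.eq_zero_or_pos a with rfl | ha
  · rcases hab with ⟨c, rfl⟩
    simp
  obtain ⟨c, rfl⟩ := hab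
  obtain ⟨k, rfl⟩ := hbn
  rcases Nat.eq_zero_or_pos c with rfl | hc
  · simp
  · rw [Nat.mul_div_cancel_left _ (Nat.mul_pos ha hc), Nat.mul_assoc,
      Nat.mul_div_cancel_left _ ha]
    exact Dvd.intro_left c rfl

lemma dvd_ugcd {e j n : ℕ} (hn : 1 ≤ n) (hen : e ∣ n) (hu : Nat.gcd e (n / e) = 1)
    (hej : e ∣ j) : e ∣ ugcd j n := by
  set d := ugcd j n with hd
  obtain ⟨hdj, hdn, hdu⟩ := ugcd_spec (j := j) hn
  set L := Nat.lcm e d with hL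
  have hLj : L ∣ j := Nat.lcm_dvd hej hdj
  have hLn : L ∣ n := Nat.lcm_dvd hen hdn
  have hLpos : 0 < L := Nat.pos_of_dvd_of_pos hLn hn
  have hcop : Nat.gcd L (n / L) = 1 := by
    by_contra hne
    have hgpos : 0 < Nat.gcd L (n / L) := Nat.gcd_pos_of_pos_left _ hLpos
    have hg : 2 ≤ Nat.gcd L (n / L) := by omega
    set p := (Nat.gcd L (n / L)).minFac with hp
    have hpp : p.Prime := Nat.minFac_prime (by omega)
    have hpL : p ∣ L := (Nat.minFac_dvd _).trans (Nat.gcd_dvd_left _ _)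
    have hpnL : p ∣ n / L := (Nat.minFac_dvd _).trans (Nat.gcd_dvd_right _ _)
    have hped : p ∣ e * d := hpL.trans (Nat.lcm_dvd_mul e d)
    rcases (Nat.Prime.dvd_mul hpp).mp hped with hpe | hpd
    · have : p ∣ n / e := hpnL.trans (div_dvd_div_of_dvd_of_dvd (Nat.dvd_lcm_left e d) hLn)
      have : p ∣ Nat.gcd e (n / e) := Nat.dvd_gcd hpe this
      rw [hu] at this
      exact hpp.one_lt.ne' (Nat.eq_one_of_dvd_one this ▸ rfl) |>.elim
    · have : p ∣ n / d := hpnL.trans (div_dvd_div_of_dvd_of_dvd (Nat.dvd_lcm_right e d) hLn)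
      have : p ∣ Nat.gcd d (n / d) := Nat.dvd_gcd hpd this
      rw [hdu] at this
      exact hpp.one_lt.ne' (Nat.eq_one_of_dvd_one this ▸ rfl) |>.elim
  have hLled : L ≤ d := Nat.le_findGreatest (Nat.le_of_dvd hn hLn) ⟨hLj, hLn, hcop⟩
  have hdL : d ∣ L := Nat.dvd_lcm_right e d
  have : L = d := Nat.le_antisymm hLled (Nat.le_of_dvd hLpos hdL)
  exact this ▸ Nat.dvd_lcm_left e d

lemma ugcd_of_dvd {j n : ℕ} (hn : 1 ≤ n) (h : n ∣ j) : ugcd j n = n := by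
  refine Nat.le_antisymm ugcd_le ?_
  unfold ugcd
  exact Nat.le_findGreatest le_rfl (by exact ⟨h, dvd_rfl, by simp [Nat.div_self hn]⟩)

lemma cond_iff {n : ℕ} (hn : 1 ≤ n) (j m : ℕ) :
    (n / ugcd j n) ∣ m ↔ (n / ugcd m n) ∣ j := by
  have key : ∀ a b : ℕ, (n / ugcd a n) ∣ b → (n / ugcd b n) ∣ a := by
    intro a b h
    obtain ⟨hdj, hdn, hdu⟩ := ugcd_spec (j := a) (n := n) hn
    set d := ugcd a n
    have h1 : n / d ∣ n := Nat.div_dvd_of_dvd hdn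
    have h2 : Nat.gcd (n / d) (n / (n / d)) = 1 := by
      rw [Nat.div_div_self hdn (by omega)]
      exact Nat.coprime_comm.mp hdu
    have h3 : n / d ∣ ugcd b n := dvd_ugcd hn h1 h2 h
    have h4 : n / ugcd b n ∣ n / (n / d) :=
      div_dvd_div_of_dvd_of_dvd h3 ((ugcd_spec (j := b) hn).2.1)
    rw [Nat.div_div_self hdn (by omega)] at h4
    exact h4.trans hdj
  exact ⟨key j m, key m j⟩

lemma ugcd_sub {j n : ℕ} (hn : 1 ≤ n) (hj : j ≤ n) : ugcd (n - j) n = ugcd j n := by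
  have key : ∀ a b : ℕ, a + b = n → ugcd a n ∣ ugcd b n := by
    intro a b hab
    obtain ⟨hdj, hdn, hdu⟩ := ugcd_spec (j := a) (n := n) hn
    exact dvd_ugcd hn hdn hdu (by
      have : ugcd a n ∣ a + b := hab ▸ hdn
      exact (Nat.dvd_add_right hdj).mp this)
  exact Nat.dvd_antisymm (key (n - j) j (by omega)) (key j (n - j) (by omega))

lemma sum_cos_Icc (q : ℕ) (hq : 1 ≤ q) :
    ∑ k ∈ Icc 1 q, Real.cos (2 * Real.pi * k / q) = if q = 1 then 1 else 0 := by
  rcases eq_or_lt_of_le hq with h1 | h2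
  · simp only [← h1]
    norm_num [Real.cos_two_pi]
  · rw [if_neg (by omega)]
    have hq0 : (q : ℂ) ≠ 0 := Nat.cast_ne_zero.mpr (by omega)
    set z : ℂ := Complex.exp (2 * Real.pi * Complex.I / q) with hz
    have hprim : IsPrimitiveRoot z q := Complex.isPrimitiveRoot_exp q (by omega)
    have hzne : z ≠ 1 := hprim.ne_one h2
    have hcos : ∀ k : ℕ, Real.cos (2 * Real.pi * k / q) = (z ^ k).re := by
      intro k
      rw [hz, ← Complex.exp_nat_mul]
      rw [show (k : ℂ) * (2 * Real.pi * Complex.I / q) =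
        ((2 * Real.pi * k / q : ℝ) : ℂ) * Complex.I by push_cast; ring]
      rw [Complex.exp_ofReal_mul_I_re]
    simp only [hcos]
    rw [← Complex.re_sum]
    have : ∑ k ∈ Icc 1 q, z ^ k = 0 := by
      rw [show Icc 1 q = Ico 1 (q+1) from rfl, geom_sum_Ico hzne (by omega)]
      rw [pow_succ, hprim.pow_eq_one, one_mul, pow_one, sub_self, zero_div]
    rw [this, Complex.zero_re]

lemma T_eval {n : ℕ} (hn : 1 ≤ n) (m : ℕ) :
    ∑ j ∈ Icc 1 n, (if (n / ugcd j n) ∣ m then Real.cos (2 * Real.pi * j / n) else 0)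
      = if ugcd m n = 1 then 1 else 0 := by
  set g := ugcd m n with hg
  have hgdvd : g ∣ n := (ugcd_spec (j := m) hn).2.1
  have hgpos : 1 ≤ g := ugcd_pos hn
  set e := n / g with he
  have hepos : 1 ≤ e := Nat.div_pos (Nat.le_of_dvd hn hgdvd) hgpos
  have hedvd : e ∣ n := Nat.div_dvd_of_dvd hgdvd
  have heg : e * g = n := by
    rw [he, Nat.div_mul_cancel hgdvd]
  have step1 : ∀ j, ((n / ugcd j n) ∣ m) ↔ e ∣ j := fun j => cond_iff hn j m
  have step2 : ∑ j ∈ Icc 1 n, (if (n / ugcd j n) ∣ m then Real.cos (2 * Real.pi * j / n) else 0)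
      = ∑ j ∈ (Icc 1 n).filter (fun j => e ∣ j), Real.cos (2 * Real.pi * j / n) := by
    rw [Finset.sum_filter]
    exact Finset.sum_congr rfl fun j _ => by rw [if_congr (step1 j) rfl rfl]
  rw [step2]
  have step3 : ∑ j ∈ (Icc 1 n).filter (fun j => e ∣ j), Real.cos (2 * Real.pi * j / n)
      = ∑ k ∈ Icc 1 g, Real.cos (2 * Real.pi * k / g) := by
    refine Finset.sum_nbij' (fun j => j / e) (fun k => k * e) ?_ ?_ ?_ ?_ ?_
    · intro j hj
      simp only [Finset.mem_filter, Finset.mem_Icc] at hj ⊢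
      obtain ⟨⟨h1, h2⟩, t, rfl⟩ := hj
      rw [Nat.mul_div_cancel_left t (by omega)]
      constructor
      · rcases Nat.eq_zero_or_pos t with rfl | h
        · omega
        · exact h
      · have : e * t ≤ e * g := heg ▸ h2
        exact Nat.le_of_mul_le_mul_left this (by omega)
    · intro k hk
      simp only [Finset.mem_filter, Finset.mem_Icc] at hk ⊢
      refine ⟨⟨by nlinarith [hk.1], ?_⟩, dvd_mul_left e k⟩
      calc k * e ≤ g * e := Nat.mul_le_mul_right e hk.2
      _ = n := by rw [Nat.mul_comm]; exact heg
    · intro j hj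
      simp only [Finset.mem_filter] at hj
      exact Nat.div_mul_cancel hj.2
    · intro k _
      exact Nat.mul_div_cancel k (by omega)
    · intro j hj
      simp only [Finset.mem_filter, Finset.mem_Icc] at hj
      obtain ⟨⟨h1, h2⟩, t, rfl⟩ := hj
      have ht : e * t / e = t := Nat.mul_div_cancel_left t (by omega)
      simp only [ht]
      congr 1
      have hn0 : (n : ℝ) ≠ 0 := Nat.cast_ne_zero.mpr (by omega)
      have hg0 : (g : ℝ) ≠ 0 := Nat.cast_ne_zero.mpr (by omega)
      have hegr : (e : ℝ) * g = n := by exact_mod_cast heg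
      have he0 : (e : ℝ) ≠ 0 := Nat.cast_ne_zero.mpr (by omega)
      push_cast
      rw [← hegr]
      field_simp
  rw [step3, sum_cos_Icc g hgpos]

section
variable {n : ℕ} {x : ℝ}

lemma abs_zeta_pow (hn : 1 ≤ n) (m : ℕ) :
    norm (Complex.exp (2 * Real.pi * Complex.I / n) ^ m) = 1 := by
  rw [norm_pow]
  have : (2 * (Real.pi : ℂ) * Complex.I / n) = ((2 * Real.pi / n : ℝ) : ℂ) * Complex.I := by
    push_cast; ring
  rw [this, Complex.norm_exp_ofReal_mul_I, one_pow]

lemma re_sub_pos (hx : 1 < x) (hn : 1 ≤ n) (m : ℕ) :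
    0 < ((x : ℂ) - Complex.exp (2 * Real.pi * Complex.I / n) ^ m).re := by
  have h1 : (Complex.exp (2 * Real.pi * Complex.I / n) ^ m).re ≤ 1 := by
    calc (Complex.exp (2 * Real.pi * Complex.I / n) ^ m).re
        ≤ norm (Complex.exp (2 * Real.pi * Complex.I / n) ^ m) := Complex.re_le_norm _
      _ = 1 := abs_zeta_pow hn m
  simp only [Complex.sub_re, Complex.ofReal_re]
  linarith

lemma sub_zeta_ne (hx : 1 < x) (hn : 1 ≤ n) (m : ℕ) :
    (x : ℂ) - Complex.exp (2 * Real.pi * Complex.I / n) ^ m ≠ 0 := by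
  intro h
  have := re_sub_pos (n := n) hx hn m
  rw [h] at this
  simp at this

lemma abs_sub_zeta_pos (hx : 1 < x) (hn : 1 ≤ n) (m : ℕ) :
    0 < norm ((x : ℂ) - Complex.exp (2 * Real.pi * Complex.I / n) ^ m) :=
  norm_pos_iff.mpr (sub_zeta_ne hx hn m)

lemma arg_sub_zeta_ne_pi (hx : 1 < x) (hn : 1 ≤ n) (m : ℕ) :
    ((x : ℂ) - Complex.exp (2 * Real.pi * Complex.I / n) ^ m).arg ≠ Real.pi := by
  rw [Ne, Complex.arg_eq_pi_iff]
  intro h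
  exact absurd h.1 (not_lt.mpr (re_sub_pos hx hn m).le)

/-- log of `x^d - 1` as a sum of `log |x - ζ^(i(n/d))|`. -/
lemma log_pow_sub_one (hx : 1 < x) (hn : 1 ≤ n) {d : ℕ} (hd : d ∣ n) (hd1 : 1 ≤ d) :
    Real.log (x ^ d - 1) =
      ∑ i ∈ range d,
        Real.log (norm ((x : ℂ) -
          Complex.exp (2 * Real.pi * Complex.I / n) ^ (i * (n / d)))) := by
  set ζ : ℂ := Complex.exp (2 * Real.pi * Complex.I / n) with hζ
  set w : ℂ := Complex.exp (2 * Real.pi * Complex.I / d) with hw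
  have hn0 : (n : ℂ) ≠ 0 := Nat.cast_ne_zero.mpr (by omega)
  have hd0 : (d : ℂ) ≠ 0 := Nat.cast_ne_zero.mpr (by omega)
  have hzw : ζ ^ (n / d) = w := by
    rw [hζ, hw, ← Complex.exp_nat_mul]
    congr 1
    rw [Nat.cast_div hd hd0]
    field_simp
  have hzeta_pow : ∀ i : ℕ, ζ ^ (i * (n / d)) = w ^ i := by
    intro i
    rw [mul_comm, pow_mul, hzw]
  have hprim : IsPrimitiveRoot w d := Complex.isPrimitiveRoot_exp d (by omega)
  have himg : nthRootsFinset d (1 : ℂ) = (range d).image (fun i => w ^ i) := by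
    refine (Finset.eq_of_subset_of_card_le ?_ ?_).symm
    · intro z hz
      simp only [Finset.mem_image, Finset.mem_range] at hz
      obtain ⟨i, hi, rfl⟩ := hz
      rw [Polynomial.mem_nthRootsFinset (by omega : 0 < d) (1 : ℂ)]
      rw [← pow_mul, mul_comm, pow_mul, hprim.pow_eq_one, one_pow]
    · rw [hprim.card_nthRootsFinset, Finset.card_image_of_injOn]
      · simp
      · intro a ha b hb hab
        simp only [Finset.mem_coe, Finset.mem_range] at ha hb
        exact hprim.pow_inj ha hb hab
  have hinj : ∀ a ∈ range d, ∀ b ∈ range d, w ^ a = w ^ b → a = b := fun a ha b hb h =>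
    hprim.pow_inj (Finset.mem_range.mp ha) (Finset.mem_range.mp hb) h
  have hprod : (x : ℂ) ^ d - 1 = ∏ i ∈ range d, ((x : ℂ) - w ^ i) := by
    have := congrArg (Polynomial.eval (x : ℂ)) (X_pow_sub_one_eq_prod (by omega : 0 < d) hprim)
    simp only [eval_sub, eval_pow, eval_X, eval_one, eval_prod, eval_sub, eval_C] at this
    rw [this, himg, Finset.prod_image hinj]
  have habs : x ^ d - 1 = ∏ i ∈ range d, norm ((x : ℂ) - w ^ i) := by
    have hpos : (0 : ℝ) < x ^ d - 1 := by
      have : (1 : ℝ) < x ^ d := one_lt_pow₀ hx (by omega)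
      linarith
    calc x ^ d - 1 = norm ((x ^ d - 1 : ℝ) : ℂ) := by
          rw [Complex.norm_of_nonneg hpos.le]
      _ = norm ((x : ℂ) ^ d - 1) := by push_cast; ring_nf
      _ = ∏ i ∈ range d, norm ((x : ℂ) - w ^ i) := by rw [hprod, norm_prod]
  rw [habs, Real.log_prod]
  · exact Finset.sum_congr rfl fun i _ => by rw [hzeta_pow]
  · intro i _
    rw [← hzw, ← pow_mul, mul_comm]
    exact (abs_sub_zeta_pos hx hn (i * (n / d))).ne'

lemma sum_range_div {d : ℕ} (hn : 1 ≤ n) (hd : d ∣ n) (hd1 : 1 ≤ d) (F : ℕ → ℝ) :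
    ∑ i ∈ range d, F (i * (n / d)) = ∑ m ∈ range n, if (n / d) ∣ m then F m else 0 := by
  rw [← Finset.sum_filter]
  set e := n / d with he
  have hde : d * e = n := Nat.mul_div_cancel' hd
  have hepos : 1 ≤ e := Nat.div_pos (Nat.le_of_dvd (by omega) hd) (by omega)
  refine Finset.sum_nbij' (fun i => i * e) (fun m => m / e) ?_ ?_ ?_ ?_ ?_
  · intro i hi
    simp only [Finset.mem_range] at hi
    simp only [Finset.mem_filter, Finset.mem_range]
    exact ⟨by nlinarith, dvd_mul_left e i⟩
  · intro m hm
    simp only [Finset.mem_filter, Finset.mem_range] at hm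
    obtain ⟨hmn, t, rfl⟩ := hm
    show e * t / e ∈ range d
    rw [Nat.mul_div_cancel_left t (by omega)]
    simp only [Finset.mem_range]
    by_contra hcon
    push_neg at hcon
    nlinarith
  · intro i _
    exact Nat.mul_div_cancel i (by omega)
  · intro m hm
    simp only [Finset.mem_filter] at hm
    exact Nat.div_mul_cancel hm.2
  · intro i _
    rfl
end

theorem stmt11 (n : ℕ) (hn : 1 ≤ n) (x : ℝ) (hx : 1 < x) :
    (unitaryCyc n).eval (x : ℂ) =
      ((∏ j ∈ Finset.Icc 1 n,
          (x ^ (ugcd j n) - 1) ^ Real.cos (2 * Real.pi * j / n) : ℝ) : ℂ) := by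
  rcases eq_or_lt_of_le hn with h1 | h2
  · subst h1
    have hu : ugcd 1 1 = 1 := Nat.le_antisymm ugcd_le (ugcd_pos le_rfl)
    have hA : (Finset.Icc 1 1).filter (fun j => ugcd j 1 = 1) = {1} := by
      rw [Finset.Icc_self, Finset.filter_singleton, if_pos hu]
    rw [unitaryCyc, hA, Finset.prod_singleton, Finset.Icc_self, Finset.prod_singleton, hu]
    simp only [Nat.cast_one, div_one, mul_one, pow_one, Complex.exp_two_pi_mul_I,
      eval_sub, eval_X, eval_C, Real.cos_two_pi, Real.rpow_one]
    push_cast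
    ring
  · -- 2 ≤ n
    set ζ : ℂ := Complex.exp (2 * Real.pi * Complex.I / n) with hζ
    set A : Finset ℕ := (Finset.Icc 1 n).filter (fun j => ugcd j n = 1) with hA
    have hnn : ugcd n n = n := ugcd_of_dvd hn dvd_rfl
    have h0n : ugcd 0 n = n := ugcd_of_dvd hn (dvd_zero n)
    have hmemA : ∀ j ∈ A, 1 ≤ j ∧ j < n ∧ ugcd j n = 1 := by
      intro j hj
      rw [hA, Finset.mem_filter, Finset.mem_Icc] at hj
      refine ⟨hj.1.1, ?_, hj.2⟩
      rcases eq_or_lt_of_le hj.1.2 with h | h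
      · exact absurd (h ▸ hj.2) (by omega)
      · exact h
    -- arg sum is zero
    have hprim : IsPrimitiveRoot ζ n := Complex.isPrimitiveRoot_exp n (by omega)
    have hconj : ∀ j ≤ n, (x : ℂ) - ζ ^ (n - j) = starRingEnd ℂ ((x : ℂ) - ζ ^ j) := by
      intro j hj
      rw [map_sub, Complex.conj_ofReal]
      congr 1
      have h1 : starRingEnd ℂ (ζ ^ j) = (ζ ^ j)⁻¹ :=
        (Complex.inv_eq_conj (by exact abs_zeta_pow hn j)).symm
      have h2 : ζ ^ (n - j) * ζ ^ j = 1 := by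
        rw [← pow_add, Nat.sub_add_cancel hj, hprim.pow_eq_one]
      rw [h1]
      exact eq_inv_of_mul_eq_one_left h2
    have harg : ∑ j ∈ A, ((x : ℂ) - ζ ^ j).arg = 0 := by
      refine Finset.sum_involution (fun j _ => n - j) ?_ ?_ ?_ ?_
      · intro j hj
        obtain ⟨hj1, hj2, hj3⟩ := hmemA j hj
        rw [hconj j (by omega), Complex.arg_conj,
          if_neg (arg_sub_zeta_ne_pi hx hn j)]
        ring
      · intro j hj hfne
        obtain ⟨hj1, hj2, hj3⟩ := hmemA j hj
        intro hcon
        have hcon' : n - j = j := hcon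
        have hn2 : n = 2 * j := by omega
        have hzj : ζ ^ j = -1 := by
          rw [hζ, ← Complex.exp_nat_mul]
          rw [show (j : ℂ) * (2 * Real.pi * Complex.I / n) = Real.pi * Complex.I by
            rw [hn2]
            have hj0 : (j : ℂ) ≠ 0 := Nat.cast_ne_zero.mpr (by omega)
            push_cast
            field_simp]
          exact Complex.exp_pi_mul_I
        apply hfne
        rw [hzj, sub_neg_eq_add]
        rw [show (x : ℂ) + 1 = ((x + 1 : ℝ) : ℂ) by push_cast; ring]
        exact Complex.arg_ofReal_of_nonneg (by linarith)
      · intro j hj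
        obtain ⟨hj1, hj2, hj3⟩ := hmemA j hj
        show n - j ∈ A
        rw [hA, Finset.mem_filter, Finset.mem_Icc]
        exact ⟨⟨by omega, by omega⟩, by rw [ugcd_sub hn (by omega), hj3]⟩
      · intro j hj
        obtain ⟨hj1, hj2, hj3⟩ := hmemA j hj
        show n - (n - j) = j
        omega
    -- LHS
    have hLHS : (unitaryCyc n).eval (x : ℂ) =
        ((Real.exp (∑ j ∈ A, Real.log (norm ((x : ℂ) - ζ ^ j))) : ℝ) : ℂ) := by
      rw [unitaryCyc]
      rw [Polynomial.eval_prod]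
      simp only [eval_sub, eval_X, eval_C]
      have e1 : ∏ j ∈ A, ((x : ℂ) - ζ ^ j) =
          Complex.exp (∑ j ∈ A, Complex.log ((x : ℂ) - ζ ^ j)) := by
        rw [Complex.exp_sum]
        exact (Finset.prod_congr rfl fun j _ => (Complex.exp_log (sub_zeta_ne hx hn j)).symm)
      have e2 : ∑ j ∈ A, Complex.log ((x : ℂ) - ζ ^ j) =
          ((∑ j ∈ A, Real.log (norm ((x : ℂ) - ζ ^ j)) : ℝ) : ℂ) := by
        apply Complex.ext
        · rw [Complex.re_sum, Complex.ofReal_re]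
          exact Finset.sum_congr rfl fun j _ => Complex.log_re _
        · rw [Complex.im_sum, Complex.ofReal_im]
          rw [← harg]
          exact Finset.sum_congr rfl fun j _ => Complex.log_im _
      rw [e1, e2, Complex.ofReal_exp]
    rw [hLHS]
    congr 1
    -- RHS
    have hpos : ∀ j : ℕ, (0 : ℝ) < x ^ ugcd j n - 1 := by
      intro j
      have h := one_lt_pow₀ hx (by have := ugcd_pos (j := j) hn; omega : ugcd j n ≠ 0)
      linarith
    have hR1 : ∏ j ∈ Finset.Icc 1 n, (x ^ ugcd j n - 1) ^ Real.cos (2 * Real.pi * j / n)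
        = Real.exp (∑ j ∈ Finset.Icc 1 n,
            Real.log (x ^ ugcd j n - 1) * Real.cos (2 * Real.pi * j / n)) := by
      rw [Real.exp_sum]
      exact Finset.prod_congr rfl fun j _ => Real.rpow_def_of_pos (hpos j) _
    have key : ∑ j ∈ Finset.Icc 1 n,
        Real.log (x ^ ugcd j n - 1) * Real.cos (2 * Real.pi * j / n)
        = ∑ j ∈ A, Real.log (norm ((x : ℂ) - ζ ^ j)) := by
      have s1 : ∀ j ∈ Finset.Icc 1 n,
          Real.log (x ^ ugcd j n - 1) * Real.cos (2 * Real.pi * j / n)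
          = ∑ m ∈ Finset.range n, (if (n / ugcd j n) ∣ m then
              Real.log (norm ((x : ℂ) - ζ ^ m)) else 0) * Real.cos (2 * Real.pi * j / n) := by
        intro j _
        rw [log_pow_sub_one hx hn ((ugcd_spec (j := j) hn).2.1) (ugcd_pos hn),
          sum_range_div hn ((ugcd_spec (j := j) hn).2.1) (ugcd_pos hn)
            (fun m => Real.log (norm ((x : ℂ) - ζ ^ m))), Finset.sum_mul]
      rw [Finset.sum_congr rfl s1, Finset.sum_comm]
      have s2 : ∀ m ∈ Finset.range n,
          ∑ j ∈ Finset.Icc 1 n, (if (n / ugcd j n) ∣ m then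
              Real.log (norm ((x : ℂ) - ζ ^ m)) else 0) * Real.cos (2 * Real.pi * j / n)
          = Real.log (norm ((x : ℂ) - ζ ^ m)) *
              (if ugcd m n = 1 then 1 else 0) := by
        intro m _
        rw [← T_eval hn m, Finset.mul_sum]
        refine Finset.sum_congr rfl fun j _ => ?_
        split_ifs with h
        · ring
        · ring
      rw [Finset.sum_congr rfl s2]
      have s3 : ∑ m ∈ Finset.range n, Real.log (norm ((x : ℂ) - ζ ^ m)) *
          (if ugcd m n = 1 then 1 else 0)
          = ∑ m ∈ (Finset.range n).filter (fun m => ugcd m n = 1),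
              Real.log (norm ((x : ℂ) - ζ ^ m)) := by
        rw [Finset.sum_filter]
        exact Finset.sum_congr rfl fun m _ => by split_ifs <;> ring
      rw [s3]
      refine Finset.sum_congr ?_ fun m _ => rfl
      ext m
      rw [Finset.mem_filter, Finset.mem_range, hA, Finset.mem_filter, Finset.mem_Icc]
      constructor
      · intro ⟨hm1, hm2⟩
        have : m ≠ 0 := by intro h; rw [h, h0n] at hm2; omega
        exact ⟨⟨by omega, by omega⟩, hm2⟩
      · intro ⟨⟨hm1, hm2⟩, hm3⟩
        have : m ≠ n := by intro h; rw [h, hnn] at hm3; omega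
        exact ⟨by omega, hm3⟩
    rw [hR1, key]
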